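/- The only simple permutations avoiding the POP P_4 are 1, 12, 21 and 3142. -/

import Mathlib

set_option maxRecDepth 10000
set_option linter.all false

/-- `π` is simple: every interval (a contiguous block of positions `[a, b)` mapped
onto a contiguous block of values `[c, c + (b-a))`) is trivial, i.e. has length
at most 1 or length `n`. -/
def IsSimple {n : ℕ} (π : Equiv.Perm (Fin n)) : Prop :=
  ∀ a b c : ℕ, a ≤ b → b ≤ n →
    (∀ i : Fin n, (a ≤ (i : ℕ) ∧ (i : ℕ) < b) ↔ (c ≤ (π i : ℕ) ∧ (π i : ℕ) < c + (b - a))) →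
    b - a ≤ 1 ∨ b - a = n

/-- `π` avoids the POP `P_4` (poset on `{1,2,3,4}` with `1 > 3`). -/
def AvoidsP4 {n : ℕ} (π : Equiv.Perm (Fin n)) : Prop :=
  ¬ ∃ i j k l : Fin n, i < j ∧ j < k ∧ k < l ∧ π k < π i

/-- Bounded version of simplicity, decidable. -/
def SB (n : ℕ) (f : Fin n → Fin n) : Prop :=
  ∀ a b c : Fin (n+1), (a:ℕ) ≤ b → (b:ℕ) ≤ n →
    (∀ i : Fin n, ((a:ℕ) ≤ (i:ℕ) ∧ (i:ℕ) < (b:ℕ)) ↔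
      ((c:ℕ) ≤ (f i : ℕ) ∧ (f i : ℕ) < (c:ℕ) + ((b:ℕ) - (a:ℕ)))) →
    (b:ℕ) - (a:ℕ) ≤ 1 ∨ (b:ℕ) - (a:ℕ) = n

instance (n : ℕ) (f : Fin n → Fin n) : Decidable (SB n f) := by
  unfold SB; infer_instance

lemma simple_to_SB {n : ℕ} (π : Equiv.Perm (Fin n)) (hs : IsSimple π) : SB n ⇑π :=
  fun a b c hab hbn h => hs a b c hab hbn h

lemma SB_to_simple {n : ℕ} (π : Equiv.Perm (Fin n)) (hsb : SB n ⇑π) : IsSimple π := by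
  intro a b c hab hbn h
  rcases Nat.eq_or_lt_of_le hab with rfl | hlt
  · left; omega
  · have han : a < n := lt_of_lt_of_le hlt hbn
    have hi := (h ⟨a, han⟩).mp (by simp; omega)
    have hc : c < n := lt_of_le_of_lt hi.1 (π ⟨a, han⟩).isLt
    exact hsb ⟨a, by omega⟩ ⟨b, by omega⟩ ⟨c, by omega⟩ hab hbn h

lemma D3 : ∀ f : Fin 3 → Fin 3, Function.Injective f → ¬ SB 3 f := by decide

lemma D4 : ∀ f : Fin 4 → Fin 4, Function.Injective f → SB 4 f →
    (¬ ∃ i j k l : Fin 4, i < j ∧ j < k ∧ k < l ∧ f k < f i) →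
    ∀ i : Fin 4, (f i : ℕ) =
      if (i : ℕ) = 0 then 2 else if (i : ℕ) = 1 then 0
      else if (i : ℕ) = 2 then 3 else 1 := by decide

lemma D4' : SB 4 ![2,0,3,1] := by decide

lemma no_big (n : ℕ) (hn : 5 ≤ n) (π : Equiv.Perm (Fin n))
    (hs : IsSimple π) (ha : AvoidsP4 π) : False := by
  have hinj : ∀ i j : Fin n, (π i:ℕ) = (π j:ℕ) → (i:ℕ) = (j:ℕ) :=
    fun i j h => congrArg Fin.val (π.injective (Fin.ext h))
  have EQ : ∀ i j : Fin n, (i:ℕ) = (j:ℕ) → (π i:ℕ) = (π j:ℕ) := fun i j h => by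
    rw [show i = j from Fin.ext h]
  have A : ∀ i k : Fin n, (i:ℕ) + 2 ≤ (k:ℕ) → (k:ℕ) + 2 ≤ n → (π i:ℕ) < (π k:ℕ) := by
    intro i k h1 h2
    by_contra hco
    have hne : (π k:ℕ) ≠ (π i:ℕ) := fun h => by have := hinj k i h; omega
    apply ha
    exact ⟨i, ⟨(i:ℕ)+1, by omega⟩, k, ⟨(k:ℕ)+1, by omega⟩,
      by rw [Fin.lt_def]; show (i:ℕ) < (i:ℕ)+1; omega,
      by rw [Fin.lt_def]; show (i:ℕ)+1 < (k:ℕ); omega,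
      by rw [Fin.lt_def]; show (k:ℕ) < (k:ℕ)+1; omega, by rw [Fin.lt_def]; omega⟩
  have hcard : ∀ (lo hi : ℕ), hi ≤ n →
      (Finset.filter (fun i : Fin n => lo ≤ (i:ℕ) ∧ (i:ℕ) < hi) Finset.univ).card = hi - lo := by
    intro lo hi hh
    have he : (Finset.filter (fun i : Fin n => lo ≤ (i:ℕ) ∧ (i:ℕ) < hi) Finset.univ)
        = Finset.attachFin (Finset.Ico lo hi)
          (fun x hx => by rw [Finset.mem_Ico] at hx; omega) := by
      ext i; simp [Finset.mem_attachFin, Finset.mem_Ico]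
    rw [he, Finset.card_attachFin, Nat.card_Ico]
  have LB : ∀ k : Fin n, (k:ℕ) + 2 ≤ n → (k:ℕ) ≤ (π k:ℕ) + 1 := by
    intro k hk
    have h1 := Finset.card_le_card_of_injOn (f := ⇑π)
      (s := Finset.filter (fun i : Fin n => 0 ≤ (i:ℕ) ∧ (i:ℕ) < (k:ℕ) - 1) Finset.univ)
      (t := Finset.filter (fun v : Fin n => 0 ≤ (v:ℕ) ∧ (v:ℕ) < (π k:ℕ)) Finset.univ)
      (by intro i hi
          simp only [Finset.mem_coe, Finset.mem_filter, Finset.mem_univ, true_and] at hi ⊢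
          exact ⟨Nat.zero_le _, A i k (by omega) hk⟩)
      (Function.Injective.injOn π.injective)
    rw [hcard _ _ (by omega), hcard _ _ (by omega)] at h1
    omega
  have UB : ∀ i : Fin n, (i:ℕ) + 3 ≤ n → (π i:ℕ) ≤ (i:ℕ) + 2 := by
    intro i hi
    have h1 := Finset.card_le_card_of_injOn (f := ⇑π)
      (s := Finset.filter (fun k : Fin n => (i:ℕ)+2 ≤ (k:ℕ) ∧ (k:ℕ) < n - 1) Finset.univ)
      (t := Finset.filter (fun v : Fin n => (π i:ℕ)+1 ≤ (v:ℕ) ∧ (v:ℕ) < n) Finset.univ)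
      (by intro k hk
          simp only [Finset.mem_coe, Finset.mem_filter, Finset.mem_univ, true_and] at hk ⊢
          exact ⟨A i k hk.1 (by omega), (π k).isLt⟩)
      (Function.Injective.injOn π.injective)
    rw [hcard _ _ (by omega), hcard _ _ (by omega)] at h1
    have := (π i).isLt
    omega
  -- position of value 0
  obtain ⟨z, hz⟩ : ∃ z : Fin n, (π z:ℕ) = 0 := ⟨π.symm ⟨0, by omega⟩, by simp⟩
  have hzcase : (z:ℕ) = 0 ∨ (z:ℕ) = 1 ∨ (z:ℕ) = n - 1 := by
    rcases le_or_gt ((z:ℕ)+2) n with h|h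
    · have := LB z h; omega
    · have := z.isLt; omega
  rcases hzcase with hz0 | hz1 | hzn
  · -- value 0 at position 0 : suffix interval
    have := hs 1 n 1 (by omega) le_rfl (fun i => by
      have h1 := i.isLt; have h2 := (π i).isLt
      have e1 := EQ i z; have e2 := hinj i z; omega)
    omega
  swap
  · -- value 0 at position n-1 : prefix interval
    have := hs 0 (n-1) 1 (by omega) (by omega) (fun i => by
      have h1 := i.isLt; have h2 := (π i).isLt
      have e1 := EQ i z; have e2 := hinj i z; omega)
    omega
  · -- value 0 at position 1
    have hp0lt : 0 < n := by omega
    set p0 : Fin n := ⟨0, hp0lt⟩ with hp0def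
    have hp0v : (p0:ℕ) = 0 := rfl
    have hub0 : (π p0:ℕ) ≤ 2 := UB p0 (by omega)
    have h02 : (π p0:ℕ) = 1 ∨ (π p0:ℕ) = 2 := by
      have := hinj p0 z; omega
    rcases h02 with h01 | h02
    · -- π 0 = 1 : interval {0,1} ↦ {1,0}
      have := hs 0 2 0 (by omega) (by omega) (fun i => by
        have h1 := i.isLt; have h2 := (π i).isLt
        have e1 := EQ i z; have e2 := hinj i z
        have e3 := EQ i p0; have e4 := hinj i p0; omega)
      omega
    · -- π 0 = 2 ; locate value 1
      obtain ⟨o, ho⟩ : ∃ o : Fin n, (π o:ℕ) = 1 := ⟨π.symm ⟨1, by omega⟩, by simp⟩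
      have hon : (o:ℕ) = n - 1 := by
        have hocase : (o:ℕ) ≤ 2 ∨ (o:ℕ) = n-1 := by
          rcases le_or_gt ((o:ℕ)+2) n with h|h
          · have := LB o h; omega
          · have := o.isLt; omega
        have e1 := EQ o z; have e2 := EQ o p0
        rcases hocase with h|h
        · exfalso
          have ho2 : (o:ℕ) = 2 := by omega
          have := A p0 o (by omega) (by omega)
          omega
        · exact h
      -- locate value n-1
      obtain ⟨m, hm⟩ : ∃ m : Fin n, (π m:ℕ) = n-1 := ⟨π.symm ⟨n-1, by omega⟩, by simp⟩
      have hmval : (m:ℕ) = n-3 ∨ (m:ℕ) = n-2 := by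
        have h1 := m.isLt; have e := EQ m o
        rcases le_or_gt ((m:ℕ)+3) n with h|h
        · have := UB m h; omega
        · omega
      -- locate value n-2
      obtain ⟨q, hq⟩ : ∃ q : Fin n, (π q:ℕ) = n-2 := ⟨π.symm ⟨n-2, by omega⟩, by simp⟩
      have hqval : (q:ℕ) = n-4 ∨ (q:ℕ) = n-3 ∨ (q:ℕ) = n-2 := by
        have h1 := q.isLt; have e := EQ q o
        rcases le_or_gt ((q:ℕ)+3) n with h|h
        · have := UB q h; omega
        · omega
      have pairInt : (q:ℕ) + (m:ℕ) = (n-3) + (n-2) → False := by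
        -- positions {n-3, n-2} carry values {n-2, n-1} : an interval of length 2
        intro hsum
        have hqm : (q:ℕ) ≠ (m:ℕ) := by
          have := EQ q m; omega
        have := hs (n-3) (n-1) (n-2) (by omega) (by omega) (fun i => by
          have h1 := i.isLt; have h2 := (π i).isLt
          have e1 := EQ i m; have e2 := hinj i m
          have e3 := EQ i q; have e4 := hinj i q; omega)
        omega
      rcases hmval with hm3 | hm2
      · -- value n-1 at position n-3
        rcases hqval with hq4 | hq3 | hq2
        · -- value n-2 at position n-4 : contradiction with A at (n-4, n-2)
          have hlt : n - 2 < n := by omega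
          set p2 : Fin n := ⟨n-2, hlt⟩ with hp2def
          have hp2v : (p2:ℕ) = n-2 := rfl
          have hA := A q p2 (by omega) (by omega)
          have h5 := (π p2).isLt
          have h6 := hinj p2 m
          omega
        · have := EQ q m; omega
        · exact pairInt (by omega)
      · -- value n-1 at position n-2
        rcases hqval with hq4 | hq3 | hq2
        · -- value n-2 at position n-4
          have hn6 : 6 ≤ n := by have := EQ q z; omega
          obtain ⟨r, hr⟩ : ∃ r : Fin n, (π r:ℕ) = n-3 := ⟨π.symm ⟨n-3, by omega⟩, by simp⟩
          have hrval : (r:ℕ) = n-5 ∨ (r:ℕ) = n-3 := by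
            have h1 := r.isLt
            have e1 := EQ r o; have e2 := EQ r q; have e3 := EQ r m
            rcases le_or_gt ((r:ℕ)+3) n with h|h
            · have := UB r h; omega
            · omega
          rcases hrval with hr5 | hr3
          · -- value n-3 at position n-5 : contradiction with A at (n-5, n-3)
            have hlt : n - 3 < n := by omega
            set p3 : Fin n := ⟨n-3, hlt⟩ with hp3def
            have hp3v : (p3:ℕ) = n-3 := rfl
            have hA := A r p3 (by omega) (by omega)
            have h5 := (π p3).isLt
            have h6 := hinj p3 q
            have h7 := hinj p3 m
            omega
          · -- positions {n-4, n-3, n-2} carry values {n-2, n-3, n-1} : interval of length 3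
            have := hs (n-4) (n-1) (n-3) (by omega) (by omega) (fun i => by
              have h1 := i.isLt; have h2 := (π i).isLt
              have e1 := EQ i m; have e2 := hinj i m
              have e3 := EQ i q; have e4 := hinj i q
              have e5 := EQ i r; have e6 := hinj i r; omega)
            omega
        · exact pairInt (by omega)
        · have := EQ q m; omega

/-- The only simple permutations avoiding `P_4` are 1, 12, 21 and 3142. -/
theorem stmt_13 (n : ℕ) (hn : 1 ≤ n) (π : Equiv.Perm (Fin n)) :
    (IsSimple π ∧ AvoidsP4 π) ↔
      (n = 1 ∨ n = 2 ∨
        (n = 4 ∧ ∀ i : Fin n, (π i : ℕ) =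
          if (i : ℕ) = 0 then 2 else if (i : ℕ) = 1 then 0
          else if (i : ℕ) = 2 then 3 else 1)) := by
  constructor
  · rintro ⟨hs, ha⟩
    rcases lt_or_ge n 5 with h5 | h5
    · interval_cases n
      · exact Or.inl rfl
      · exact Or.inr (Or.inl rfl)
      · exact absurd (simple_to_SB π hs) (D3 ⇑π π.injective)
      · exact Or.inr (Or.inr ⟨rfl, D4 ⇑π π.injective (simple_to_SB π hs) ha⟩)
    · exact (no_big n h5 π hs ha).elim
  · rintro (rfl | rfl | ⟨rfl, hv⟩)
    · refine ⟨fun a b c hab hbn h => by omega, ?_⟩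
      rintro ⟨i, j, k, l, hij, hjk, hkl, -⟩
      have := i.isLt; have := j.isLt
      rw [Fin.lt_def] at hij; omega
    · refine ⟨fun a b c hab hbn h => by omega, ?_⟩
      rintro ⟨i, j, k, l, hij, hjk, hkl, -⟩
      have := i.isLt; have := j.isLt; have := k.isLt
      rw [Fin.lt_def] at hij hjk; omega
    · have hfun : ⇑π = ![2,0,3,1] := by
        funext i
        apply Fin.ext
        rw [hv i]
        fin_cases i <;> rfl
      refine ⟨SB_to_simple π (by rw [hfun]; exact D4'), ?_⟩
      rintro ⟨i, j, k, l, hij, hjk, hkl, hlt⟩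
      have h1 := i.isLt; have h2 := j.isLt; have h3 := k.isLt; have h4 := l.isLt
      rw [Fin.lt_def] at hij hjk hkl hlt
      have hvi := hv i; have hvk := hv k
      have hi0 : (i:ℕ) = 0 := by omega
      have hk2 : (k:ℕ) = 2 := by omega
      rw [hi0] at hvi; rw [hk2] at hvk
      simp at hvi hvk
      omega
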